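/- arXiv:2405.16891 — 11 statements merged into one kernel-verified Lean document; each statement's English description precedes it below -/
import Mathlib

section
/- For any positive integers n > k there exists a simple graph G on the vertex set Fin n and a family f : Fin n → EuclideanSpace ℂ (Fin k) such that f spans EuclideanSpace ℂ (Fin k) and the Gramian matrix of f equals the Laplacian matrix L(G); that is, for any n > k there exists a G(n,k)-frame for ℂ^k. -/
open scoped ComplexInnerProductSpace Classical

theorem stmt_1 (n k : ℕ) (hk : 0 < k) (hkn : k < n) :
    ∃ G : SimpleGraph (Fin n), ∃ f : Fin n → EuclideanSpace ℂ (Fin k),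
      Submodule.span ℂ (Set.range f) = ⊤ ∧
      ∀ i j : Fin n, ⟪f i, f j⟫ = ((G.lapMatrix ℝ) i j : ℂ) := by
  classical
  set G : SimpleGraph (Fin n) :=
    SimpleGraph.fromRel (fun i j => j.val = i.val + 1 ∧ j.val ≤ k) with hG
  set u : Fin n → EuclideanSpace ℂ (Fin k) := fun i =>
    if h : i.val < k then EuclideanSpace.single ⟨i.val, h⟩ 1 else 0 with hu
  set v : Fin n → EuclideanSpace ℂ (Fin k) := fun i =>
    if h : 0 < i.val ∧ i.val ≤ k then EuclideanSpace.single ⟨i.val - 1, by omega⟩ 1 else 0 with hv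
  set f : Fin n → EuclideanSpace ℂ (Fin k) := fun i => u i - v i with hf
  have hsing : ∀ a b : Fin k,
      ⟪EuclideanSpace.single a (1:ℂ), EuclideanSpace.single b 1⟫ = if a = b then 1 else 0 := by
    intro a b
    rw [EuclideanSpace.inner_single_left]
    simp [EuclideanSpace.single_apply, eq_comm]
  have fval : ∀ (i : Fin n) (h1 : (i : ℕ) < k) (h2 : 0 < (i : ℕ)),
      f i = EuclideanSpace.single (⟨(i : ℕ), h1⟩ : Fin k) 1 -
        EuclideanSpace.single (⟨(i : ℕ) - 1, by omega⟩ : Fin k) 1 := by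
    intro i h1 h2
    simp only [hf, hu, hv]
    rw [dif_pos h1, dif_pos (⟨h2, by omega⟩ : 0 < (i : ℕ) ∧ (i : ℕ) ≤ k)]
  have fval0 : ∀ (i : Fin n) (h1 : (i : ℕ) < k) (h2 : (i : ℕ) = 0),
      f i = EuclideanSpace.single (⟨(i : ℕ), h1⟩ : Fin k) 1 := by
    intro i h1 h2
    simp only [hf, hu, hv]
    rw [dif_pos h1, dif_neg (by omega), sub_zero]
  refine ⟨G, f, ?_, ?_⟩
  · -- span
    have key : ∀ m : ℕ, ∀ hm : m < k,
        EuclideanSpace.single (⟨m, hm⟩ : Fin k) (1:ℂ) ∈ Submodule.span ℂ (Set.range f) := by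
      intro m
      induction m with
      | zero =>
        intro hm
        have h0 : f ⟨0, by omega⟩ = EuclideanSpace.single (⟨0, hm⟩ : Fin k) (1:ℂ) :=
          fval0 ⟨0, by omega⟩ hm rfl
        rw [← h0]
        exact Submodule.subset_span ⟨_, rfl⟩
      | succ m ih =>
        intro hm
        have hmem : f ⟨m + 1, by omega⟩ ∈ Submodule.span ℂ (Set.range f) :=
          Submodule.subset_span ⟨_, rfl⟩
        have hprev := ih (by omega)
        have hval : f ⟨m + 1, by omega⟩ =
            EuclideanSpace.single (⟨m + 1, hm⟩ : Fin k) (1:ℂ) -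
            EuclideanSpace.single (⟨m, by omega⟩ : Fin k) (1:ℂ) :=
          fval ⟨m + 1, by omega⟩ hm (Nat.succ_pos m)
        have hrw : EuclideanSpace.single (⟨m + 1, hm⟩ : Fin k) (1:ℂ) =
            f ⟨m + 1, by omega⟩ + EuclideanSpace.single (⟨m, by omega⟩ : Fin k) (1:ℂ) := by
          rw [hval]; abel
        rw [hrw]
        exact Submodule.add_mem _ hmem hprev
    rw [eq_top_iff, ← (EuclideanSpace.basisFun (Fin k) ℂ).toBasis.span_eq]
    apply Submodule.span_le.mpr
    rintro x ⟨m, rfl⟩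
    have : (EuclideanSpace.basisFun (Fin k) ℂ).toBasis m = EuclideanSpace.single m 1 := by
      rw [OrthonormalBasis.coe_toBasis, EuclideanSpace.basisFun_apply]
    rw [this]
    exact key m.val m.isLt
  · -- Gram
    intro i j
    have huu : ⟪u i, u j⟫ = if i.val < k ∧ i.val = j.val then 1 else 0 := by
      simp only [hu]
      by_cases h1 : (i : ℕ) < k <;> by_cases h2 : (j : ℕ) < k
      · rw [dif_pos h1, dif_pos h2, hsing]
        simp only [Fin.mk.injEq]
        split_ifs <;> first | rfl | (exfalso; omega)
      · rw [dif_pos h1, dif_neg h2, inner_zero_right, if_neg (by omega)]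
      · rw [dif_neg h1, dif_pos h2, inner_zero_left, if_neg (by omega)]
      · rw [dif_neg h1, dif_neg h2, inner_zero_left, if_neg (by omega)]
    have huv : ⟪u i, v j⟫ = if j.val = i.val + 1 ∧ j.val ≤ k then 1 else 0 := by
      simp only [hu, hv]
      by_cases h1 : (i : ℕ) < k <;> by_cases h2 : 0 < (j : ℕ) ∧ (j : ℕ) ≤ k
      · rw [dif_pos h1, dif_pos h2, hsing]
        simp only [Fin.mk.injEq]
        split_ifs <;> first | rfl | (exfalso; omega)
      · rw [dif_pos h1, dif_neg h2, inner_zero_right, if_neg (by omega)]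
      · rw [dif_neg h1, dif_pos h2, inner_zero_left, if_neg (by omega)]
      · rw [dif_neg h1, dif_neg h2, inner_zero_left, if_neg (by omega)]
    have hvu : ⟪v i, u j⟫ = if i.val = j.val + 1 ∧ i.val ≤ k then 1 else 0 := by
      simp only [hu, hv]
      by_cases h1 : 0 < (i : ℕ) ∧ (i : ℕ) ≤ k <;> by_cases h2 : (j : ℕ) < k
      · rw [dif_pos h1, dif_pos h2, hsing]
        simp only [Fin.mk.injEq]
        split_ifs <;> first | rfl | (exfalso; omega)
      · rw [dif_pos h1, dif_neg h2, inner_zero_right, if_neg (by omega)]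
      · rw [dif_neg h1, dif_pos h2, inner_zero_left, if_neg (by omega)]
      · rw [dif_neg h1, dif_neg h2, inner_zero_left, if_neg (by omega)]
    have hvv : ⟪v i, v j⟫ = if 0 < i.val ∧ i.val ≤ k ∧ i.val = j.val then 1 else 0 := by
      simp only [hv]
      by_cases h1 : 0 < (i : ℕ) ∧ (i : ℕ) ≤ k <;> by_cases h2 : 0 < (j : ℕ) ∧ (j : ℕ) ≤ k
      · rw [dif_pos h1, dif_pos h2, hsing]
        simp only [Fin.mk.injEq]
        split_ifs <;> first | rfl | (exfalso; omega)
      · rw [dif_pos h1, dif_neg h2, inner_zero_right, if_neg (by omega)]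
      · rw [dif_neg h1, dif_pos h2, inner_zero_left, if_neg (by omega)]
      · rw [dif_neg h1, dif_neg h2, inner_zero_left, if_neg (by omega)]
    have hdeg : ∀ i : Fin n, (G.degree i : ℝ) =
        (if i.val < k then 1 else 0) + (if 0 < i.val ∧ i.val ≤ k then 1 else 0) := by
      intro i
      have hnb : G.neighborFinset i =
          (if h : i.val < k then {(⟨i.val + 1, by omega⟩ : Fin n)} else ∅) ∪
          (if h : 0 < i.val ∧ i.val ≤ k then {(⟨i.val - 1, by omega⟩ : Fin n)} else ∅) := by
        ext j
        simp only [SimpleGraph.mem_neighborFinset, hG, SimpleGraph.fromRel_adj, ne_eq]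
        split_ifs <;> simp [Fin.ext_iff] <;> omega
      have hdisj : Disjoint
          (if h : i.val < k then {(⟨i.val + 1, by omega⟩ : Fin n)} else (∅ : Finset (Fin n)))
          (if h : 0 < i.val ∧ i.val ≤ k then {(⟨i.val - 1, by omega⟩ : Fin n)}
            else (∅ : Finset (Fin n))) := by
        split_ifs <;> simp [Fin.ext_iff] <;> omega
      rw [← SimpleGraph.card_neighborFinset_eq_degree, hnb,
        Finset.card_union_of_disjoint hdisj]
      split_ifs <;> simp <;> norm_num
    have hadj : (G.adjMatrix ℝ) i j =
        if (j.val = i.val + 1 ∧ j.val ≤ k) ∨ (i.val = j.val + 1 ∧ i.val ≤ k) then 1 else 0 := by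
      rw [SimpleGraph.adjMatrix_apply]
      congr 1
      simp only [hG, SimpleGraph.fromRel_adj, ne_eq, Fin.ext_iff, eq_iff_iff]
      constructor
      · rintro ⟨hne, h | h⟩
        · exact Or.inl h
        · exact Or.inr h
      · rintro (h | h)
        · exact ⟨by omega, Or.inl h⟩
        · exact ⟨by omega, Or.inr h⟩
    have hlap : (G.lapMatrix ℝ) i j =
        (if i.val = j.val then
          (if i.val < k then 1 else 0) + (if 0 < i.val ∧ i.val ≤ k then 1 else 0)
          else 0) -
        (if (j.val = i.val + 1 ∧ j.val ≤ k) ∨ (i.val = j.val + 1 ∧ i.val ≤ k) then 1 else 0) := by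
      rw [SimpleGraph.lapMatrix, Matrix.sub_apply, hadj]
      congr 1
      rw [SimpleGraph.degMatrix, Matrix.diagonal_apply]
      by_cases h : (i : ℕ) = (j : ℕ)
      · rw [if_pos (Fin.ext h), if_pos h, hdeg]
      · rw [if_neg (fun hc => h (congrArg Fin.val hc)), if_neg h]
    have hfij : ⟪f i, f j⟫ = ⟪u i, u j⟫ - ⟪u i, v j⟫ - ⟪v i, u j⟫ + ⟪v i, v j⟫ := by
      simp only [hf, inner_sub_left, inner_sub_right]
      ring
    rw [hfij, huu, huv, hvu, hvv]
    convert (congrArg (fun x : ℝ => (x : ℂ)) hlap).symm using 1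
    swap
    · congr
    push_cast
    split_ifs <;> first | (exfalso; omega) | norm_num
end

section
/- Let G be a simple graph on Fin n whose Laplacian matrix L(G) has rank k, and let f : Fin n → EuclideanSpace ℂ (Fin k) be an L_G(n,k)-frame built from an orthogonal matrix M and eigenvalues μ with (f i) j = √(μ j) · M i j. Define g : Fin n → EuclideanSpace ℂ (Fin k) by (g i) j = (μ j)⁻¹ · (f i) j. Then g is the canonical dual frame of f: S (g i) = f i for all i, where S is the frame operator of f, and consequently v = ∑ i, ⟪f i, v⟫ • g i for every v ∈ EuclideanSpace ℂ (Fin k). -/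
open scoped ComplexInnerProductSpace
open Matrix

theorem stmt_5 (n k : ℕ) (hkn : k ≤ n)
    (G : SimpleGraph (Fin n)) [DecidableRel G.Adj]
    (hrank : (G.lapMatrix ℝ).rank = k)
    (M : Matrix (Fin n) (Fin n) ℝ) (hM : M ∈ Matrix.orthogonalGroup (Fin n) ℝ)
    (μ : Fin n → ℝ)
    (hμpos : ∀ j : Fin n, (j : ℕ) < k → 0 < μ j)
    (hμzero : ∀ j : Fin n, k ≤ (j : ℕ) → μ j = 0)
    (hL : G.lapMatrix ℝ = M * Matrix.diagonal μ * Mᵀ)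
    (f g : Fin n → EuclideanSpace ℂ (Fin k))
    (hf : ∀ (i : Fin n) (j : Fin k),
      f i j = (Real.sqrt (μ (Fin.castLE hkn j)) * M i (Fin.castLE hkn j) : ℂ))
    (hg : ∀ (i : Fin n) (j : Fin k),
      g i j = ((μ (Fin.castLE hkn j) : ℂ))⁻¹ * f i j) :
    (∀ i : Fin n, ∑ i' : Fin n, ⟪f i', g i⟫ • f i' = f i) ∧
    (∀ v : EuclideanSpace ℂ (Fin k), v = ∑ i : Fin n, ⟪f i, v⟫ • g i) := by
  set c : Fin k → Fin n := Fin.castLE hkn with hc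
  have hpos : ∀ j : Fin k, 0 < μ (c j) := fun j => hμpos (c j) (by simpa [hc] using j.isLt)
  have hsq : ∀ j : Fin k, ((Real.sqrt (μ (c j)) : ℂ)) * (Real.sqrt (μ (c j)) : ℂ) = (μ (c j) : ℂ) := by
    intro j
    rw [← Complex.ofReal_mul, Real.mul_self_sqrt (hpos j).le]
  have hne : ∀ j : Fin k, (μ (c j) : ℂ) ≠ 0 := fun j => by
    exact_mod_cast (hpos j).ne'
  have horth : ∀ j j' : Fin n, ∑ i, (M i j : ℂ) * (M i j' : ℂ) = if j = j' then 1 else 0 := by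
    have h1 : star M * M = 1 := (Matrix.mem_orthogonalGroup_iff' (Fin n) ℝ).mp hM
    intro j j'
    have h2 := congrFun (congrFun h1 j) j'
    simp only [Matrix.mul_apply, Matrix.star_apply, star_trivial, Matrix.one_apply] at h2
    calc ∑ i, (M i j : ℂ) * (M i j' : ℂ)
        = ((∑ i, M i j * M i j' : ℝ) : ℂ) := by push_cast; ring_nf
      _ = if j = j' then 1 else 0 := by rw [h2]; split_ifs <;> simp
  have hcinj : Function.Injective c := Fin.castLE_injective hkn
  have hsum : ∀ (a : Fin n → ℂ) (w : Fin n → EuclideanSpace ℂ (Fin k)) (j : Fin k),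
      (∑ i, a i • w i) j = ∑ i, a i * w i j := by
    intro a w j
    rw [WithLp.ofLp_sum,
      Finset.sum_apply]
    rfl
  have hinner : ∀ i' i : Fin n, ⟪f i', g i⟫ = ∑ j : Fin k, (M i' (c j) : ℂ) * (M i (c j) : ℂ) := by
    intro i' i
    rw [PiLp.inner_apply]
    refine Finset.sum_congr rfl fun j _ => ?_
    rw [hg i j, hf i' j, hf i j]
    simp only [RCLike.inner_apply, ← hc, _root_.map_mul, Complex.conj_ofReal]
    calc (((μ (c j) : ℂ))⁻¹ * ((Real.sqrt (μ (c j)) : ℂ) * (M i (c j) : ℂ))) *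
          ((Real.sqrt (μ (c j)) : ℂ) * (M i' (c j) : ℂ))
        = ((Real.sqrt (μ (c j)) : ℂ) * (Real.sqrt (μ (c j)) : ℂ)) * ((μ (c j) : ℂ))⁻¹ *
          ((M i' (c j) : ℂ) * (M i (c j) : ℂ)) := by ring
      _ = (M i' (c j) : ℂ) * (M i (c j) : ℂ) := by
          rw [hsq j, mul_inv_cancel₀ (hne j), one_mul]
  constructor
  · intro i
    ext j''
    rw [hsum (fun i' => ⟪f i', g i⟫) f j'']
    calc ∑ i' : Fin n, ⟪f i', g i⟫ * f i' j''
        = ∑ i' : Fin n, ∑ j : Fin k, (M i' (c j) : ℂ) * (M i (c j) : ℂ) *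
            ((Real.sqrt (μ (c j'')) : ℂ) * (M i' (c j'') : ℂ)) := by
          refine Finset.sum_congr rfl fun i' _ => ?_
          rw [hinner i' i, hf i' j'', Finset.sum_mul]
      _ = ∑ j : Fin k, (M i (c j) : ℂ) * (Real.sqrt (μ (c j'')) : ℂ) *
            ∑ i' : Fin n, (M i' (c j) : ℂ) * (M i' (c j'') : ℂ) := by
          rw [Finset.sum_comm]
          refine Finset.sum_congr rfl fun j _ => ?_
          rw [Finset.mul_sum]
          exact Finset.sum_congr rfl fun i' _ => by ring
      _ = ∑ j : Fin k, (M i (c j) : ℂ) * (Real.sqrt (μ (c j'')) : ℂ) *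
            (if j = j'' then 1 else 0) := by
          refine Finset.sum_congr rfl fun j _ => ?_
          rw [horth]
          congr 1
          simp [hcinj.eq_iff]
      _ = f i j'' := by
          simp only [mul_ite, mul_one, mul_zero, Finset.sum_ite_eq', Finset.mem_univ, if_true]
          rw [hf i j'']
          ring
  · intro v
    ext j
    rw [hsum (fun i => ⟪f i, v⟫) g j]
    symm
    have hconj : ∀ (i : Fin n) (j' : Fin k),
        (starRingEnd ℂ) (f i j') = (Real.sqrt (μ (c j')) : ℂ) * (M i (c j') : ℂ) := by
      intro i j'
      rw [hf i j']
      simp [← hc, Complex.conj_ofReal]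
    calc ∑ i : Fin n, ⟪f i, v⟫ * g i j
        = ∑ i : Fin n, ∑ j' : Fin k, (Real.sqrt (μ (c j')) : ℂ) * (M i (c j')) * v j' *
            (((μ (c j) : ℂ))⁻¹ * ((Real.sqrt (μ (c j)) : ℂ) * (M i (c j)))) := by
          refine Finset.sum_congr rfl fun i _ => ?_
          rw [hg i j, hf i j, PiLp.inner_apply]
          simp only [RCLike.inner_apply]
          rw [Finset.sum_congr rfl fun j' _ => by rw [hconj i j'], Finset.sum_mul]
          exact Finset.sum_congr rfl fun j' _ => by ring
      _ = ∑ j' : Fin k, (Real.sqrt (μ (c j')) : ℂ) * v j' * ((μ (c j) : ℂ))⁻¹ *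
            (Real.sqrt (μ (c j)) : ℂ) * ∑ i : Fin n, (M i (c j') : ℂ) * (M i (c j)) := by
          rw [Finset.sum_comm]
          refine Finset.sum_congr rfl fun j' _ => ?_
          rw [Finset.mul_sum]
          exact Finset.sum_congr rfl fun i _ => by ring
      _ = ∑ j' : Fin k, (Real.sqrt (μ (c j')) : ℂ) * v j' * ((μ (c j) : ℂ))⁻¹ *
            (Real.sqrt (μ (c j)) : ℂ) * (if j' = j then 1 else 0) := by
          refine Finset.sum_congr rfl fun j' _ => ?_
          rw [horth]
          congr 1
          simp [hcinj.eq_iff]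
      _ = v j := by
          simp only [mul_ite, mul_one, mul_zero, Finset.sum_ite_eq', Finset.mem_univ, if_true]
          calc (Real.sqrt (μ (c j)) : ℂ) * v j * ((μ (c j) : ℂ))⁻¹ * (Real.sqrt (μ (c j)) : ℂ)
              = ((Real.sqrt (μ (c j)) : ℂ) * (Real.sqrt (μ (c j)) : ℂ)) * ((μ (c j) : ℂ))⁻¹ * v j := by
                ring
            _ = v j := by rw [hsq j, mul_inv_cancel₀ (hne j), one_mul]
end

section
/- Let G be a connected simple graph on Fin n (n ≥ 2), let f : Fin n → EuclideanSpace ℂ (Fin (n−1)) be a G(n,n−1)-frame (f spans ℂ^{n−1} and its Gramian matrix equals L(G)), and let S be the frame operator of f (which is invertible). Then a family g : Fin n → EuclideanSpace ℂ (Fin (n−1)) is a dual frame of f if and only if there exists a vector h ∈ EuclideanSpace ℂ (Fin (n−1)) such that g i = S⁻¹ (f i) + h for every i ∈ Fin n. -/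
open scoped ComplexInnerProductSpace

theorem stmt_6 (n : ℕ) (hn : 2 ≤ n)
    (G : SimpleGraph (Fin n)) [DecidableRel G.Adj] (hG : G.Connected)
    (f : Fin n → EuclideanSpace ℂ (Fin (n - 1)))
    (hf_span : Submodule.span ℂ (Set.range f) = ⊤)
    (hf_gram : ∀ i j : Fin n, ⟪f i, f j⟫ = ((G.lapMatrix ℝ) i j : ℂ))
    (S : EuclideanSpace ℂ (Fin (n - 1)) ≃ₗ[ℂ] EuclideanSpace ℂ (Fin (n - 1)))
    (hS : ∀ v : EuclideanSpace ℂ (Fin (n - 1)), S v = ∑ i : Fin n, ⟪f i, v⟫ • f i)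
    (g : Fin n → EuclideanSpace ℂ (Fin (n - 1))) :
    (∀ v : EuclideanSpace ℂ (Fin (n - 1)), v = ∑ i : Fin n, ⟪f i, v⟫ • g i) ↔
    (∃ h : EuclideanSpace ℂ (Fin (n - 1)), ∀ i : Fin n, g i = S.symm (f i) + h) := by
  classical
  -- if a vector is orthogonal to all f j, it is zero
  have key : ∀ w : EuclideanSpace ℂ (Fin (n - 1)), (∀ j, ⟪f j, w⟫ = 0) → w = 0 := by
    intro w hw
    have horth : ∀ u, u ∈ Submodule.span ℂ (Set.range f) → ⟪u, w⟫ = 0 := by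
      intro u hu
      induction hu using Submodule.span_induction with
      | mem x hx => obtain ⟨j, rfl⟩ := hx; exact hw j
      | zero => simp
      | add x y _ _ hx hy => rw [inner_add_left, hx, hy, add_zero]
      | smul c x _ hx => rw [inner_smul_left, hx, mul_zero]
    have hww : ⟪w, w⟫ = 0 := horth w (by rw [hf_span]; trivial)
    exact inner_self_eq_zero.mp hww
  -- the sum of the frame vectors is zero
  have hsum : ∑ i, f i = 0 := by
    apply key
    intro j
    have hrow : ∑ i, (G.lapMatrix ℝ) j i = 0 := by
      have := congrFun (G.lapMatrix_mulVec_const_eq_zero (R := ℝ)) j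
      simpa [Matrix.mulVec, dotProduct] using this
    rw [inner_sum]
    simp_rw [hf_gram]
    rw [← Complex.ofReal_sum, hrow, Complex.ofReal_zero]
  -- canonical dual frame
  have hcanon : ∀ v : EuclideanSpace ℂ (Fin (n - 1)),
      v = ∑ i, ⟪f i, v⟫ • S.symm (f i) := by
    intro v
    have : S.symm (S v) = ∑ i, ⟪f i, v⟫ • S.symm (f i) := by
      rw [hS, map_sum]
      simp_rw [map_smul]
    rw [← this, S.symm_apply_apply]
  constructor
  · intro hdual
    have hzero : ∀ v : EuclideanSpace ℂ (Fin (n - 1)),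
        ∑ i, ⟪f i, v⟫ • (g i - S.symm (f i)) = 0 := by
      intro v
      simp_rw [smul_sub]
      rw [Finset.sum_sub_distrib, ← hdual v, ← hcanon v, sub_self]
    -- analysis operator
    set A : EuclideanSpace ℂ (Fin (n - 1)) →ₗ[ℂ] (Fin n → ℂ) :=
      LinearMap.pi (fun i => (innerSL ℂ (f i)).toLinearMap) with hA
    have hA_apply : ∀ v k, A v k = ⟪f k, v⟫ := fun v k => rfl
    have hAinj : Function.Injective A := by
      rw [← LinearMap.ker_eq_bot]
      apply (Submodule.eq_bot_iff _).mpr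
      intro v hv
      exact key v (fun j => congrFun hv j)
    -- sum functional
    set σ : (Fin n → ℂ) →ₗ[ℂ] ℂ := ∑ i, LinearMap.proj i with hσ
    have hσ_apply : ∀ c : Fin n → ℂ, σ c = ∑ i, c i := by
      intro c; simp [hσ, LinearMap.sum_apply]
    set i0 : Fin n := ⟨0, by omega⟩ with hi0
    have hσ_surj : Function.Surjective σ := by
      intro c
      refine ⟨Pi.single i0 c, ?_⟩
      rw [hσ_apply]
      simp [Pi.single_apply]
    have hWZ : LinearMap.range A ≤ LinearMap.ker σ := by
      rintro _ ⟨v, rfl⟩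
      rw [LinearMap.mem_ker, hσ_apply]
      have h2 : ∑ i, A v i = ∑ i, ⟪f i, v⟫ :=
        Finset.sum_congr rfl fun k _ => hA_apply v k
      rw [h2, ← sum_inner, hsum, inner_zero_left]
    have hrankW : Module.finrank ℂ (LinearMap.range A) = n - 1 := by
      rw [LinearMap.finrank_range_of_inj hAinj, finrank_euclideanSpace_fin]
    have hrankZ : Module.finrank ℂ (LinearMap.ker σ) = n - 1 := by
      have hrn := LinearMap.finrank_range_add_finrank_ker σ
      rw [LinearMap.range_eq_top.mpr hσ_surj, finrank_top,
        Module.finrank_fintype_fun_eq_card, Fintype.card_fin,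
        Module.finrank_self] at hrn
      omega
    have hWZ' : LinearMap.range A = LinearMap.ker σ :=
      Submodule.eq_of_le_of_finrank_le hWZ (by rw [hrankW, hrankZ])
    refine ⟨g i0 - S.symm (f i0), fun i => ?_⟩
    have hc : (Pi.single i 1 - Pi.single i0 1 : Fin n → ℂ) ∈ LinearMap.ker σ := by
      rw [LinearMap.mem_ker, hσ_apply]
      simp [Pi.single_apply]
    rw [← hWZ'] at hc
    obtain ⟨v, hv⟩ := hc
    have hAv : ∀ k, ⟪f k, v⟫ = (Pi.single i 1 - Pi.single i0 1 : Fin n → ℂ) k :=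
      fun k => (hA_apply v k).symm.trans (congrFun hv k)
    have hd : ∑ k, ((Pi.single i 1 - Pi.single i0 1 : Fin n → ℂ) k) • (g k - S.symm (f k))
        = 0 := by
      simp_rw [← hAv]
      exact hzero v
    have hd' : (g i - S.symm (f i)) - (g i0 - S.symm (f i0)) = 0 := by
      simpa [Pi.sub_apply, sub_smul, Finset.sum_sub_distrib, Pi.single_apply,
        ite_smul, Finset.sum_ite_eq'] using hd
    have := sub_eq_zero.mp hd'
    rw [sub_eq_iff_eq_add'] at this
    exact this
  · rintro ⟨h, hg⟩ v
    simp_rw [hg, smul_add]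
    rw [Finset.sum_add_distrib, ← Finset.sum_smul]
    have h1 : ∑ i, ⟪f i, v⟫ = (0 : ℂ) := by
      rw [← sum_inner, hsum, inner_zero_left]
    rw [h1, zero_smul, add_zero]
    exact hcanon v
end

section
/- Let G be a connected simple graph on Fin n (n ≥ 2), so its Laplacian matrix has rank n−1, and let f : Fin n → EuclideanSpace ℂ (Fin (n−1)) be an L_G(n,n−1)-frame built from an orthogonal matrix M and eigenvalues μ₁ ≥ … ≥ μ_{n−1} > μ_n = 0 with (f i) j = √(μ j) · M i j. Let D be the diagonal matrix diag(μ₁⁻¹,…,μ_{n−1}⁻¹). Then g : Fin n → EuclideanSpace ℂ (Fin (n−1)) is a dual frame of f if and only if there exists h ∈ EuclideanSpace ℂ (Fin (n−1)) such that g i = D · (f i) + h for every i ∈ Fin n. -/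
open scoped ComplexInnerProductSpace
open Matrix

theorem stmt_7 (n : ℕ) (hn : 2 ≤ n) (hkn : n - 1 ≤ n)
    (G : SimpleGraph (Fin n)) [DecidableRel G.Adj] (hG : G.Connected)
    (M : Matrix (Fin n) (Fin n) ℝ) (hM : M ∈ Matrix.orthogonalGroup (Fin n) ℝ)
    (μ : Fin n → ℝ) (hμmono : ∀ i j : Fin n, i ≤ j → μ j ≤ μ i)
    (hμpos : ∀ j : Fin n, (j : ℕ) < n - 1 → 0 < μ j)
    (hμzero : ∀ j : Fin n, n - 1 ≤ (j : ℕ) → μ j = 0)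
    (hL : G.lapMatrix ℝ = M * Matrix.diagonal μ * Mᵀ)
    (f : Fin n → EuclideanSpace ℂ (Fin (n - 1)))
    (hf : ∀ (i : Fin n) (j : Fin (n - 1)),
      f i j = (Real.sqrt (μ (Fin.castLE hkn j)) * M i (Fin.castLE hkn j) : ℂ))
    (g : Fin n → EuclideanSpace ℂ (Fin (n - 1))) :
    (∀ v : EuclideanSpace ℂ (Fin (n - 1)), v = ∑ i : Fin n, ⟪f i, v⟫ • g i) ↔
    (∃ h : EuclideanSpace ℂ (Fin (n - 1)), ∀ (i : Fin n) (j : Fin (n - 1)),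
      g i j = ((μ (Fin.castLE hkn j) : ℂ))⁻¹ * f i j + h j) := by
  have hn1 : n - 1 < n := by omega
  set last : Fin n := ⟨n - 1, hn1⟩ with hlastdef
  set z : Fin n := ⟨0, by omega⟩ with hzdef
  -- orthogonality facts
  have hMt : Mᵀ * M = 1 := by
    have := (Matrix.mem_orthogonalGroup_iff' (Fin n) ℝ).mp hM
    simpa [Matrix.star_eq_conjTranspose] using this
  have hMMt : M * Mᵀ = 1 := by
    have := (Matrix.mem_orthogonalGroup_iff (Fin n) ℝ).mp hM
    simpa [Matrix.star_eq_conjTranspose] using this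
  have hcolR : ∀ a b : Fin n, ∑ i, M i a * M i b = if a = b then (1 : ℝ) else 0 := by
    intro a b
    have h1 := congrFun (congrFun hMt a) b
    simpa [Matrix.mul_apply, Matrix.transpose_apply, Matrix.one_apply] using h1
  have hcol : ∀ a b : Fin n, ∑ i, (M i a : ℂ) * (M i b : ℂ) = if a = b then (1 : ℂ) else 0 := by
    intro a b
    calc ∑ i, (M i a : ℂ) * (M i b : ℂ) = ((∑ i, M i a * M i b : ℝ) : ℂ) := by push_cast; rfl
    _ = _ := by rw [hcolR a b]; split <;> simp
  have hrow : ∀ a b : Fin n, ∑ j', (M a j' : ℂ) * (M b j' : ℂ) = if a = b then (1 : ℂ) else 0 := by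
    intro a b
    have h1 := congrFun (congrFun hMMt a) b
    simp only [Matrix.mul_apply, Matrix.transpose_apply, Matrix.one_apply] at h1
    calc ∑ j', (M a j' : ℂ) * (M b j' : ℂ) = ((∑ j', M a j' * M b j' : ℝ) : ℂ) := by
          push_cast; rfl
    _ = _ := by rw [h1]; split <;> simp
  -- last column of M is constant
  have hμlast : μ last = 0 := hμzero last (le_refl _)
  have hLM : G.lapMatrix ℝ * M = M * Matrix.diagonal μ := by
    rw [hL, Matrix.mul_assoc (M * Matrix.diagonal μ) Mᵀ M, hMt, Matrix.mul_one]
  have hker : ∀ i i' : Fin n, M i last = M i' last := by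
    have h0 : Matrix.toLin' (G.lapMatrix ℝ) (fun i => M i last) = 0 := by
      rw [Matrix.toLin'_apply]
      funext i
      have h1 : (G.lapMatrix ℝ * M) i last = (M * Matrix.diagonal μ) i last := by rw [hLM]
      rw [Matrix.mul_diagonal, hμlast, mul_zero] at h1
      simpa [Matrix.mulVec, dotProduct, Matrix.mul_apply] using h1
    intro i i'
    exact (G.lapMatrix_mulVec_eq_zero_iff_forall_reachable).mp (by rwa [Matrix.toLin'_apply] at h0) i i'
      (hG.preconnected i i')
  have hcne : M z last ≠ 0 := by
    intro hc
    have h1 : ∑ i, M i last * M i last = 1 := by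
      have := hcolR last last; simpa using this
    have h2 : ∀ i : Fin n, M i last * M i last = 0 := by
      intro i; rw [hker i z, hc, mul_zero]
    rw [Finset.sum_congr rfl fun i _ => h2 i] at h1
    simp at h1
  have hsumR : ∀ a : Fin n, a ≠ last → ∑ i, M i a = 0 := by
    intro a ha
    have h1 : ∑ i, M i a * M i last = 0 := by
      have := hcolR a last; rwa [if_neg ha] at this
    have h2 : (∑ i, M i a) * M z last = 0 := by
      rw [← h1, Finset.sum_mul]
      exact Finset.sum_congr rfl fun i _ => by rw [hker i z]
    exact (mul_eq_zero.mp h2).resolve_right hcne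
  have hsum : ∀ a : Fin n, a ≠ last → ∑ i, (M i a : ℂ) = 0 := by
    intro a ha
    calc ∑ i, (M i a : ℂ) = ((∑ i, M i a : ℝ) : ℂ) := by push_cast; rfl
    _ = 0 := by rw [hsumR a ha]; simp
  -- eigenvalue facts
  have hμ'pos : ∀ j : Fin (n - 1), 0 < μ (Fin.castLE hkn j) := fun j => hμpos _ j.isLt
  have hsq : ∀ j : Fin (n - 1), (Real.sqrt (μ (Fin.castLE hkn j)) : ℂ) *
      (Real.sqrt (μ (Fin.castLE hkn j)) : ℂ) = (μ (Fin.castLE hkn j) : ℂ) := by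
    intro j
    rw [← Complex.ofReal_mul, Real.mul_self_sqrt (hμ'pos j).le]
  have hsqne : ∀ j : Fin (n - 1), (Real.sqrt (μ (Fin.castLE hkn j)) : ℂ) ≠ 0 := by
    intro j
    simpa using (Real.sqrt_pos.mpr (hμ'pos j)).ne'
  have hμne : ∀ j : Fin (n - 1), (μ (Fin.castLE hkn j) : ℂ) ≠ 0 := by
    intro j; simpa using (hμ'pos j).ne'
  have hcastne : ∀ j : Fin (n - 1), (Fin.castLE hkn j : Fin n) ≠ last := by
    intro j hj
    have := congrArg Fin.val (hj.trans hlastdef)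
    simp only [Fin.coe_castLE, Fin.val_mk] at this
    have := j.isLt
    omega
  -- f facts
  have hfreal : ∀ (i : Fin n) (l : Fin (n - 1)), (starRingEnd ℂ) (f i l) = f i l := by
    intro i l
    rw [hf]
    simp only [_root_.map_mul, Complex.conj_ofReal]
  have hinner : ∀ (i : Fin n) (v : EuclideanSpace ℂ (Fin (n - 1))),
      ⟪f i, v⟫ = ∑ l, f i l * v l := by
    intro i v
    rw [PiLp.inner_apply]
    exact Finset.sum_congr rfl fun l _ => by rw [RCLike.inner_apply, hfreal, mul_comm]
  have hff : ∀ l j : Fin (n - 1), ∑ i, f i l * f i j =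
      if l = j then (μ (Fin.castLE hkn j) : ℂ) else 0 := by
    intro l j
    have h1 : ∑ i, f i l * f i j = (Real.sqrt (μ (Fin.castLE hkn l)) : ℂ) *
        (Real.sqrt (μ (Fin.castLE hkn j)) : ℂ) *
        ∑ i, (M i (Fin.castLE hkn l) : ℂ) * (M i (Fin.castLE hkn j) : ℂ) := by
      rw [Finset.mul_sum]
      exact Finset.sum_congr rfl fun i _ => by rw [hf, hf]; ring
    rw [h1, hcol]
    by_cases hlj : l = j
    · subst hlj
      rw [if_pos rfl, if_pos rfl, mul_one, hsq]
    · rw [if_neg (fun hc => hlj (Fin.castLE_inj.mp hc)), if_neg hlj, mul_zero]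
  have hfsum : ∀ l : Fin (n - 1), ∑ i, f i l = 0 := by
    intro l
    have h1 : ∑ i, f i l = (Real.sqrt (μ (Fin.castLE hkn l)) : ℂ) *
        ∑ i, (M i (Fin.castLE hkn l) : ℂ) := by
      rw [Finset.mul_sum]
      exact Finset.sum_congr rfl fun i _ => by rw [hf]
    rw [h1, hsum _ (hcastne l), mul_zero]
  constructor
  · -- forward direction
    intro H
    have hkey : ∀ l j : Fin (n - 1), ∑ i, f i l * g i j = if l = j then (1 : ℂ) else 0 := by
      intro l j
      have h1 : (EuclideanSpace.single l (1 : ℂ)) j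
          = (∑ i, ⟪f i, EuclideanSpace.single l (1 : ℂ)⟫ • g i) j := by
        rw [← H (EuclideanSpace.single l (1 : ℂ))]
      rw [EuclideanSpace.single_apply] at h1
      have h2 : (∑ i, ⟪f i, EuclideanSpace.single l (1 : ℂ)⟫ • g i) j
          = ∑ i, f i l * g i j := by
        rw [WithLp.ofLp_sum, Finset.sum_apply]
        refine Finset.sum_congr rfl fun i _ => ?_
        rw [PiLp.smul_apply, smul_eq_mul, EuclideanSpace.inner_single_right, hfreal, one_mul]
      rw [h2] at h1
      rw [← h1]
      by_cases hlj : l = j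
      · subst hlj; simp
      · rw [if_neg hlj, if_neg (fun hc => hlj hc.symm)]
    refine ⟨WithLp.toLp 2 (fun j => g z j - (μ (Fin.castLE hkn j) : ℂ)⁻¹ * f z j :
      Fin (n - 1) → ℂ), fun i j => ?_⟩
    set w : Fin n → ℂ := fun i' => g i' j - (μ (Fin.castLE hkn j) : ℂ)⁻¹ * f i' j with hw
    have hS : ∀ a : Fin n, a ≠ last → ∑ i', (M i' a : ℂ) * w i' = 0 := by
      intro a ha
      have hav : (a : ℕ) < n - 1 := by
        have h1 := a.isLt
        have h2 : (a : ℕ) ≠ n - 1 := fun hc => ha (Fin.ext hc)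
        omega
      set l : Fin (n - 1) := ⟨a, hav⟩ with hl
      have hcast : Fin.castLE hkn l = a := Fin.ext rfl
      have h1 : (Real.sqrt (μ (Fin.castLE hkn l)) : ℂ) * ∑ i', (M i' a : ℂ) * w i' = 0 := by
        rw [Finset.mul_sum]
        have hfw : ∀ i' : Fin n,
            (Real.sqrt (μ (Fin.castLE hkn l)) : ℂ) * ((M i' a : ℂ) * w i') = f i' l * w i' := by
          intro i'
          rw [hf i' l, hcast]; ring
        rw [Finset.sum_congr rfl fun i' _ => hfw i']
        have hsplit : ∑ i', f i' l * w i' = (∑ i', f i' l * g i' j)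
            - (μ (Fin.castLE hkn j) : ℂ)⁻¹ * ∑ i', f i' l * f i' j := by
          rw [Finset.mul_sum, ← Finset.sum_sub_distrib]
          refine Finset.sum_congr rfl fun i' _ => ?_
          simp only [hw]; ring
        rw [hsplit, hkey l j, hff l j]
        by_cases hlj : l = j
        · rw [if_pos hlj, if_pos hlj, inv_mul_cancel₀ (hμne j), sub_self]
        · rw [if_neg hlj, if_neg hlj, mul_zero, sub_zero]
      exact (mul_eq_zero.mp h1).resolve_left (hsqne l)
    have hT : ∀ i' : Fin n, w i' = (M i' last : ℂ) * ∑ i'', (M i'' last : ℂ) * w i'' := by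
      intro i'
      have h1 : w i' = ∑ i'', (∑ a, (M i' a : ℂ) * (M i'' a : ℂ)) * w i'' := by
        rw [Finset.sum_congr rfl fun i'' _ => by rw [hrow i' i'']]
        simp [ite_mul]
      have h2 : ∑ i'', (∑ a, (M i' a : ℂ) * (M i'' a : ℂ)) * w i''
          = ∑ a, (M i' a : ℂ) * ∑ i'', (M i'' a : ℂ) * w i'' := by
        rw [Finset.sum_congr rfl fun i'' _ => Finset.sum_mul _ _ (w i''), Finset.sum_comm]
        refine Finset.sum_congr rfl fun a _ => ?_
        rw [Finset.mul_sum]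
        exact Finset.sum_congr rfl fun i'' _ => by ring
      rw [h1, h2]
      rw [Finset.sum_eq_single last (fun a _ ha => by rw [hS a ha, mul_zero])
        (fun hc => absurd (Finset.mem_univ last) hc)]
    have hwz : w i = w z := by rw [hT i, hT z, hker i z]
    simp only [hw] at hwz
    have : g i j - (μ (Fin.castLE hkn j) : ℂ)⁻¹ * f i j
        = g z j - (μ (Fin.castLE hkn j) : ℂ)⁻¹ * f z j := hwz
    simp only [WithLp.ofLp_toLp]
    linear_combination this
  · -- converse
    rintro ⟨h, hg⟩ v
    ext j
    symm
    calc (∑ i, ⟪f i, v⟫ • g i) j = ∑ i, ⟪f i, v⟫ * g i j := by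
          rw [WithLp.ofLp_sum, Finset.sum_apply]
          exact Finset.sum_congr rfl fun i _ => by rw [PiLp.smul_apply, smul_eq_mul]
      _ = ∑ i, (∑ l, f i l * v l) * ((μ (Fin.castLE hkn j) : ℂ)⁻¹ * f i j + h j) := by
          refine Finset.sum_congr rfl fun i _ => ?_
          rw [hinner, hg i j]
      _ = ∑ l, ∑ i, (f i l * v l) * ((μ (Fin.castLE hkn j) : ℂ)⁻¹ * f i j + h j) := by
          rw [Finset.sum_comm]
          exact Finset.sum_congr rfl fun i _ => Finset.sum_mul _ _ _
      _ = ∑ l, (v l * (μ (Fin.castLE hkn j) : ℂ)⁻¹ * ∑ i, f i l * f i j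
            + v l * h j * ∑ i, f i l) := by
          refine Finset.sum_congr rfl fun l _ => ?_
          rw [Finset.mul_sum, Finset.mul_sum, ← Finset.sum_add_distrib]
          exact Finset.sum_congr rfl fun i _ => by ring
      _ = ∑ l, (if l = j then v l else 0) := by
          refine Finset.sum_congr rfl fun l _ => ?_
          rw [hff l j, hfsum l, mul_zero, add_zero]
          by_cases hlj : l = j
          · rw [if_pos hlj, if_pos hlj, mul_assoc, inv_mul_cancel₀ (hμne j), mul_one]
          · rw [if_neg hlj, if_neg hlj, mul_zero]
      _ = v j := by simp
end

section
/- Let G be a simple graph on Fin n, let f : Fin n → EuclideanSpace ℂ (Fin k) be a G(n,k)-frame with invertible frame operator S, and let g : Fin n → EuclideanSpace ℂ (Fin k) be a dual frame of f. Then the function i ↦ g i − S⁻¹ (f i) is constant on each connected component of G: for all vertices i, j ∈ Fin n with G.Reachable i j, one has g i − S⁻¹ (f i) = g j − S⁻¹ (f j). -/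
open scoped ComplexInnerProductSpace

lemma symm_range_eq (n : ℕ) (T : EuclideanSpace ℝ (Fin n) →ₗ[ℝ] EuclideanSpace ℝ (Fin n))
    (hT : T.IsSymmetric) : LinearMap.range T = (LinearMap.ker T)ᗮ := by
  have hle : LinearMap.range T ≤ (LinearMap.ker T)ᗮ := by
    rintro y ⟨x, rfl⟩
    rw [Submodule.mem_orthogonal]
    intro z hz
    rw [← hT z x, LinearMap.mem_ker.mp hz, inner_zero_left]
  refine Submodule.eq_of_le_of_finrank_eq hle ?_
  have h1 := LinearMap.finrank_range_add_finrank_ker T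
  have h2 := Submodule.finrank_add_finrank_orthogonal (LinearMap.ker T)
  omega

lemma single_sub_mem_range (n : ℕ) (G : SimpleGraph (Fin n)) [DecidableRel G.Adj]
    (i j : Fin n) (h : G.Reachable i j) :
    ∃ w : Fin n → ℝ, Matrix.mulVec (G.lapMatrix ℝ) w = Pi.single i 1 - Pi.single j 1 := by
  set T : EuclideanSpace ℝ (Fin n) →ₗ[ℝ] EuclideanSpace ℝ (Fin n) :=
    Matrix.toEuclideanLin (G.lapMatrix ℝ)
  have hT : T.IsSymmetric :=
    Matrix.isHermitian_iff_isSymmetric.mp (G.posSemidef_lapMatrix ℝ).1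
  have hker : ∀ z : EuclideanSpace ℝ (Fin n), z ∈ LinearMap.ker T → z i = z j := by
    intro z hz
    have hz' : Matrix.toLin' (G.lapMatrix ℝ) z = 0 := by
      have h0 : Matrix.mulVec (G.lapMatrix ℝ) z = 0 := by
        have h := congrArg WithLp.ofLp (LinearMap.mem_ker.mp hz); exact h
      rw [Matrix.toLin'_apply]; exact h0
    exact (G.lapMatrix_mulVec_eq_zero_iff_forall_reachable.mp (by rw [← Matrix.toLin'_apply]; exact hz')) i j h
  have hmem : (WithLp.toLp 2 (Pi.single i (1:ℝ) - Pi.single j 1) : EuclideanSpace ℝ (Fin n)) ∈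
      (LinearMap.ker T)ᗮ := by
    rw [Submodule.mem_orthogonal]
    intro z hz
    have hx : ∀ x : Fin n, (WithLp.toLp 2 (Pi.single i (1:ℝ) - Pi.single j 1) : EuclideanSpace ℝ (Fin n)) x
        = (if x = i then (1:ℝ) else 0) - (if x = j then 1 else 0) := by
      intro x
      have h0 : (WithLp.toLp 2 (Pi.single i (1:ℝ) - Pi.single j 1) : EuclideanSpace ℝ (Fin n)) x
          = (Pi.single i (1:ℝ) : Fin n → ℝ) x - (Pi.single j (1:ℝ) : Fin n → ℝ) x := rfl
      rw [h0]
      simp [Pi.single_apply]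
    have : (inner ℝ z (WithLp.toLp 2 (Pi.single i (1:ℝ) - Pi.single j 1) : EuclideanSpace ℝ (Fin n)) : ℝ)
        = z i - z j := by
      simp only [PiLp.inner_apply, RCLike.inner_apply, starRingEnd_apply, star_trivial, hx,
        mul_sub, mul_ite, mul_one, mul_zero, Finset.sum_sub_distrib, Finset.sum_ite_eq',
        Finset.mem_univ, if_true, Pi.sub_apply, Pi.single_apply, sub_mul, ite_mul, one_mul, zero_mul,
        Finset.sum_ite_eq]
    rw [this, hker z hz, sub_self]
  rw [← symm_range_eq n T hT] at hmem
  obtain ⟨w, hw⟩ := hmem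
  exact ⟨w.ofLp, congrArg WithLp.ofLp hw⟩

theorem stmt_8 (n k : ℕ) (G : SimpleGraph (Fin n)) [DecidableRel G.Adj]
    (f : Fin n → EuclideanSpace ℂ (Fin k))
    (hf_span : Submodule.span ℂ (Set.range f) = ⊤)
    (hf_gram : ∀ i j : Fin n, ⟪f i, f j⟫ = ((G.lapMatrix ℝ) i j : ℂ))
    (S : EuclideanSpace ℂ (Fin k) ≃ₗ[ℂ] EuclideanSpace ℂ (Fin k))
    (hS : ∀ v : EuclideanSpace ℂ (Fin k), S v = ∑ i : Fin n, ⟪f i, v⟫ • f i)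
    (g : Fin n → EuclideanSpace ℂ (Fin k))
    (hg_dual : ∀ v : EuclideanSpace ℂ (Fin k), v = ∑ i : Fin n, ⟪f i, v⟫ • g i) :
    ∀ i j : Fin n, G.Reachable i j →
      g i - S.symm (f i) = g j - S.symm (f j) := by
  intro i j hreach
  -- the "error" vector identity: ∑ ⟪f a, v⟫ • (g a - S⁻¹ f a) = 0 for all v
  have hzero : ∀ v : EuclideanSpace ℂ (Fin k),
      ∑ a : Fin n, ⟪f a, v⟫ • (g a - S.symm (f a)) = 0 := by
    intro v
    have h1 : ∑ a : Fin n, ⟪f a, v⟫ • g a = v := (hg_dual v).symm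
    have h2 : ∑ a : Fin n, ⟪f a, v⟫ • S.symm (f a) = v := by
      have : S.symm (S v) = v := S.symm_apply_apply v
      calc ∑ a : Fin n, ⟪f a, v⟫ • S.symm (f a)
          = S.symm (∑ a : Fin n, ⟪f a, v⟫ • f a) := by
            rw [map_sum]; simp [map_smul]
        _ = v := by rw [← hS v]; exact S.symm_apply_apply v
    simp only [smul_sub, Finset.sum_sub_distrib, h1, h2, sub_self]
  obtain ⟨w, hw⟩ := single_sub_mem_range n G i j hreach
  set v : EuclideanSpace ℂ (Fin k) := ∑ b : Fin n, (w b : ℂ) • f b with hv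
  have hinner : ∀ a : Fin n, ⟪f a, v⟫ = (((Pi.single i 1 - Pi.single j 1 : Fin n → ℝ)) a : ℂ) := by
    intro a
    have : ⟪f a, v⟫ = ∑ b : Fin n, (w b : ℂ) * ((G.lapMatrix ℝ) a b : ℂ) := by
      rw [hv, inner_sum]
      congr 1; ext b
      rw [inner_smul_right, hf_gram a b]
    rw [this]
    have hrow := congrFun hw a
    rw [Matrix.mulVec, dotProduct] at hrow
    push_cast [← hrow]
    congr 1; ext b; ring
  have := hzero v
  rw [Finset.sum_congr rfl (fun a _ => by rw [hinner a])] at this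
  have hsum : ∑ a : Fin n, (((Pi.single i 1 - Pi.single j 1 : Fin n → ℝ)) a : ℂ) •
      (g a - S.symm (f a)) = (g i - S.symm (f i)) - (g j - S.symm (f j)) := by
    simp [Pi.sub_apply, Pi.single_apply, sub_smul, Finset.sum_sub_distrib, ite_smul,
      apply_ite Complex.ofReal]
  rw [hsum] at this
  exact sub_eq_zero.mp this
end

section
/- Let G be a simple graph on Fin n and let f : Fin n → EuclideanSpace ℂ (Fin k) be a G(n,k)-frame. If f is a tight frame (there exists α > 0 with ∑ i, ‖⟪f i, v⟫‖² = α · ‖v‖² for all v), then each connected component of G is a regular graph: for all vertices u, v ∈ Fin n with G.Reachable u v, the degrees satisfy G.degree u = G.degree v. -/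
open scoped ComplexInnerProductSpace

theorem stmt_9 (n k : ℕ) (G : SimpleGraph (Fin n)) [DecidableRel G.Adj]
    (f : Fin n → EuclideanSpace ℂ (Fin k))
    (hf_span : Submodule.span ℂ (Set.range f) = ⊤)
    (hf_gram : ∀ i j : Fin n, ⟪f i, f j⟫ = ((G.lapMatrix ℝ) i j : ℂ))
    (htight : ∃ α : ℝ, 0 < α ∧
      ∀ v : EuclideanSpace ℂ (Fin k), ∑ i : Fin n, ‖⟪f i, v⟫‖ ^ 2 = α * ‖v‖ ^ 2) :
    ∀ u v : Fin n, G.Reachable u v → G.degree u = G.degree v := by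
  obtain ⟨α, hα, htight⟩ := htight
  -- entrywise description of the Laplacian
  have hL : ∀ i j : Fin n, G.lapMatrix ℝ i j =
      (if i = j then (G.degree i : ℝ) else 0) - (if G.Adj i j then 1 else 0) := by
    intro i j
    simp [SimpleGraph.lapMatrix, SimpleGraph.degMatrix, Matrix.diagonal_apply]
  -- key: every vertex of positive degree has degree α - 1
  have key : ∀ u : Fin n, 0 < G.degree u → (G.degree u : ℝ) = α - 1 := by
    intro u hu
    have h1 : ∑ i : Fin n, ‖⟪f i, f u⟫‖ ^ 2 = α * ‖f u‖ ^ 2 := htight (f u)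
    have hnorm : (‖f u‖ : ℝ) ^ 2 = G.lapMatrix ℝ u u := by
      have := hf_gram u u
      rw [inner_self_eq_norm_sq_to_K] at this
      have h2 : ((‖f u‖ ^ 2 : ℝ) : ℂ) = ((G.lapMatrix ℝ u u : ℝ) : ℂ) := by
        push_cast
        exact this
      exact Complex.ofReal_injective h2
    have hsum : ∑ i : Fin n, ‖⟪f i, f u⟫‖ ^ 2 = ∑ i : Fin n, (G.lapMatrix ℝ i u) ^ 2 := by
      refine Finset.sum_congr rfl fun i _ => ?_
      rw [hf_gram, Complex.norm_real, Real.norm_eq_abs, sq_abs]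
    have hLdiag : G.lapMatrix ℝ u u = (G.degree u : ℝ) := by
      rw [hL]; simp
    have hsum2 : ∑ i : Fin n, (G.lapMatrix ℝ i u) ^ 2 =
        (G.degree u : ℝ) ^ 2 + (G.degree u : ℝ) := by
      rw [← Finset.add_sum_erase _ _ (Finset.mem_univ u), hLdiag]
      congr 1
      have : ∀ i ∈ Finset.univ.erase u, (G.lapMatrix ℝ i u) ^ 2 =
          (if G.Adj i u then (1:ℝ) else 0) := by
        intro i hi
        have hiu : i ≠ u := Finset.ne_of_mem_erase hi
        rw [hL]
        by_cases h : G.Adj i u <;> simp [hiu, h]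
      rw [Finset.sum_congr rfl this]
      have hdeg : (G.degree u : ℝ) = ∑ i : Fin n, (if G.Adj i u then (1:ℝ) else 0) := by
        rw [Finset.sum_boole]
        norm_cast
        apply congrArg Finset.card
        ext i
        simp [SimpleGraph.adj_comm]
      rw [hdeg, ← Finset.add_sum_erase _ _ (Finset.mem_univ u)]
      simp [G.irrefl]
    have heq : (G.degree u : ℝ) ^ 2 + (G.degree u : ℝ) = α * (G.degree u : ℝ) := by
      rw [← hsum2, ← hsum, h1, hnorm, hLdiag]
    have hdu : (G.degree u : ℝ) ≠ 0 := by positivity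
    have heq' : ((G.degree u : ℝ) + 1) * (G.degree u : ℝ) = α * (G.degree u : ℝ) := by
      nlinarith [heq]
    have := mul_right_cancel₀ hdu heq'
    linarith
  intro u v huv
  by_cases huv' : u = v
  · rw [huv']
  · obtain ⟨p⟩ := huv
    have hu : 0 < G.degree u := by
      cases p with
      | nil => exact absurd rfl huv'
      | cons h q => exact (G.degree_pos_iff_exists_adj u).mpr ⟨_, h⟩
    have hv : 0 < G.degree v := by
      obtain ⟨q⟩ := (SimpleGraph.Reachable.symm ⟨p⟩)
      cases q with
      | nil => exact absurd rfl huv'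
      | cons h _ => exact (G.degree_pos_iff_exists_adj v).mpr ⟨_, h⟩
    have := (key u hu).trans (key v hv).symm
    exact_mod_cast this
end

section
/- Let G be a connected simple graph on Fin n (n ≥ 2) and let f : Fin n → EuclideanSpace ℂ (Fin (n−1)) be a G(n,n−1)-frame. If f is a tight frame, then G is a regular graph: there exists r : ℕ such that every vertex of G has degree r. -/
open scoped ComplexInnerProductSpace

theorem stmt_10 (n : ℕ) (hn : 2 ≤ n)
    (G : SimpleGraph (Fin n)) [DecidableRel G.Adj] (hG : G.Connected)
    (f : Fin n → EuclideanSpace ℂ (Fin (n - 1)))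
    (hf_span : Submodule.span ℂ (Set.range f) = ⊤)
    (hf_gram : ∀ i j : Fin n, ⟪f i, f j⟫ = ((G.lapMatrix ℝ) i j : ℂ))
    (htight : ∃ α : ℝ, 0 < α ∧
      ∀ v : EuclideanSpace ℂ (Fin (n - 1)),
        ∑ i : Fin n, ‖⟪f i, v⟫‖ ^ 2 = α * ‖v‖ ^ 2) :
    ∃ r : ℕ, ∀ v : Fin n, G.degree v = r := by
  obtain ⟨α, hα, ht⟩ := htight
  -- every vertex has positive degree
  have hdeg : ∀ v : Fin n, 0 < G.degree v := by
    intro v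
    rw [SimpleGraph.degree_pos_iff_exists_adj]
    obtain ⟨w, hw⟩ : ∃ w : Fin n, w ≠ v := by
      refine Fintype.exists_ne_of_one_lt_card ?_ v
      simpa using (show 1 < n by omega)
    obtain ⟨p⟩ := hG.preconnected v w
    exact ⟨p.getVert 1, p.adj_snd (p.not_nil_of_ne (Ne.symm hw))⟩
  -- key identity for each vertex
  have key : ∀ v : Fin n, ((G.degree v : ℝ)) ^ 2 + (G.degree v : ℝ)
      = α * (G.degree v : ℝ) := by
    intro v
    have h := ht (f v)
    have hLvv : (G.lapMatrix ℝ) v v = (G.degree v : ℝ) := by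
      simp [SimpleGraph.lapMatrix, SimpleGraph.degMatrix, Matrix.diagonal_apply_eq,
        Matrix.sub_apply, SimpleGraph.adjMatrix_apply]
    have hnorm : ‖f v‖ ^ 2 = (G.degree v : ℝ) := by
      have h1 : (⟪f v, f v⟫ : ℂ) = ((‖f v‖ ^ 2 : ℝ) : ℂ) := by
        rw [inner_self_eq_norm_sq_to_K]; norm_cast
      rw [hf_gram v v, hLvv] at h1
      exact_mod_cast h1.symm
    have hLHS : ∑ i : Fin n, ‖(⟪f i, f v⟫ : ℂ)‖ ^ 2
        = ((G.degree v : ℝ)) ^ 2 + (G.degree v : ℝ) := by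
      have hterm : ∀ i : Fin n, ‖(⟪f i, f v⟫ : ℂ)‖ ^ 2
          = (if i = v then ((G.degree v : ℝ)) ^ 2 else 0)
            + (if G.Adj i v then (1 : ℝ) else 0) := by
        intro i
        rw [hf_gram i v]
        have : ‖(((G.lapMatrix ℝ) i v : ℝ) : ℂ)‖ ^ 2 = ((G.lapMatrix ℝ) i v) ^ 2 := by
          rw [Complex.norm_real, Real.norm_eq_abs, sq_abs]
        rw [this]
        rcases eq_or_ne i v with rfl | hne
        · simp [hLvv]
        · have : (G.lapMatrix ℝ) i v = if G.Adj i v then (-1 : ℝ) else 0 := by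
            simp [SimpleGraph.lapMatrix, Matrix.sub_apply, SimpleGraph.degMatrix,
              Matrix.diagonal_apply_ne _ hne, SimpleGraph.adjMatrix_apply]
            split <;> ring
          rw [this]
          by_cases hA : G.Adj i v <;> simp [hA, hne]
      rw [Finset.sum_congr rfl (fun i _ => hterm i), Finset.sum_add_distrib,
        Finset.sum_ite_eq' Finset.univ v, if_pos (Finset.mem_univ v)]
      congr 1
      rw [Finset.sum_boole]
      have : Finset.filter (fun i => G.Adj i v) Finset.univ = G.neighborFinset v := by
        ext i
        simp only [Finset.mem_filter, Finset.mem_univ, true_and,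
          SimpleGraph.mem_neighborFinset]
        exact ⟨fun h => h.symm, fun h => h.symm⟩
      rw [this]
      rfl
    rw [hLHS, hnorm] at h
    exact h
  -- conclude: degree = α - 1 for all v
  refine ⟨G.degree ⟨0, by omega⟩, fun v => ?_⟩
  have hval : ∀ v : Fin n, (G.degree v : ℝ) = α - 1 := by
    intro v
    have hd : (0 : ℝ) < (G.degree v : ℝ) := by exact_mod_cast hdeg v
    have := key v
    have h2 : (G.degree v : ℝ) * ((G.degree v : ℝ) + 1 - α) = 0 := by ring_nf; linarith [this]
    rcases mul_eq_zero.mp h2 with h | h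
    · linarith
    · linarith
  have : (G.degree v : ℝ) = (G.degree (⟨0, by omega⟩ : Fin n) : ℝ) := by
    rw [hval, hval]
  exact_mod_cast this
end

section
/- Let G be a simple graph on Fin n with no null vertex (every vertex has degree at least 1) and let f : Fin n → EuclideanSpace ℂ (Fin k) be a G(n,k)-frame. If f is a tight frame, then f is a uniform frame: there exists a constant c such that ‖f i‖ = c for every i ∈ Fin n. -/
open scoped ComplexInnerProductSpace

theorem stmt_12 (n k : ℕ) (G : SimpleGraph (Fin n)) [DecidableRel G.Adj]
    (hnull : ∀ v : Fin n, 1 ≤ G.degree v)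
    (f : Fin n → EuclideanSpace ℂ (Fin k))
    (hf_span : Submodule.span ℂ (Set.range f) = ⊤)
    (hf_gram : ∀ i j : Fin n, ⟪f i, f j⟫ = ((G.lapMatrix ℝ) i j : ℂ))
    (htight : ∃ α : ℝ, 0 < α ∧
      ∀ v : EuclideanSpace ℂ (Fin k),
        ∑ i : Fin n, ‖⟪f i, v⟫‖ ^ 2 = α * ‖v‖ ^ 2) :
    ∃ c : ℝ, ∀ i : Fin n, ‖f i‖ = c := by
  obtain ⟨α, hα, ht⟩ := htight
  have hnorm : ∀ j, ‖f j‖ ^ 2 = (G.degree j : ℝ) := by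
    intro j
    have h := hf_gram j j
    rw [inner_self_eq_norm_sq_to_K] at h
    have h2 : ((‖f j‖ ^ 2 : ℝ) : ℂ) = (((G.lapMatrix ℝ) j j : ℝ) : ℂ) := by
      push_cast; exact h
    have : (‖f j‖ ^ 2 : ℝ) = ((G.lapMatrix ℝ) j j : ℝ) := by exact_mod_cast h2
    rw [this]
    simp [SimpleGraph.lapMatrix, SimpleGraph.degMatrix]
  have hdeg : ∀ j, (G.degree j : ℝ) = α - 1 := by
    intro j
    have h := ht (f j)
    have hL : ∀ i, ‖⟪f i, f j⟫‖ ^ 2 = ((G.lapMatrix ℝ) i j) ^ 2 := by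
      intro i
      rw [hf_gram i j]
      rw [Complex.norm_real]
      exact sq_abs _
    simp_rw [hL] at h
    have hsum : ∑ i, ((G.lapMatrix ℝ) i j) ^ 2
        = (G.degree j : ℝ) ^ 2 + (G.degree j : ℝ) := by
      rw [Finset.sum_eq_add_sum_sdiff_singleton_of_mem (Finset.mem_univ j)]
      have h1 : ((G.lapMatrix ℝ) j j) ^ 2 = (G.degree j : ℝ) ^ 2 := by
        simp [SimpleGraph.lapMatrix, SimpleGraph.degMatrix]
      have h2 : ∑ i ∈ Finset.univ \ {j}, ((G.lapMatrix ℝ) i j) ^ 2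
          = (G.degree j : ℝ) := by
        have heq : ∀ i ∈ Finset.univ \ {j}, ((G.lapMatrix ℝ) i j) ^ 2
            = if G.Adj j i then (1:ℝ) else 0 := by
          intro i hi
          simp only [Finset.mem_sdiff, Finset.mem_singleton] at hi
          simp only [SimpleGraph.lapMatrix, Matrix.sub_apply, SimpleGraph.degMatrix,
            Matrix.diagonal_apply_ne _ (hi.2), SimpleGraph.adjMatrix_apply]
          by_cases hadj : G.Adj i j
          · simp [hadj, hadj.symm]
          · rw [if_neg (fun h : G.Adj j i => hadj h.symm)]
            simp [hadj]
        rw [Finset.sum_congr rfl heq,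
          Finset.sum_sdiff_eq_sub (Finset.singleton_subset_iff.mpr (Finset.mem_univ j))]
        rw [Finset.sum_boole, Finset.sum_singleton, if_neg (G.irrefl),
          show Finset.univ.filter (fun i => G.Adj j i) = G.neighborFinset j from by
            ext; simp]
        rw [sub_zero, SimpleGraph.degree]
      rw [h1, h2]
    rw [hsum, hnorm j] at h
    have hd : (0:ℝ) < (G.degree j : ℝ) := by exact_mod_cast hnull j
    nlinarith
  refine ⟨Real.sqrt (α - 1), fun i => ?_⟩
  have := hnorm i
  rw [hdeg i] at this
  rw [← this, Real.sqrt_sq (norm_nonneg _)]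
end

section
/- Let G be a connected simple graph on Fin n with n ≥ 2. Then G has exactly two distinct eigenvalues (the set of real eigenvalues of its adjacency matrix has exactly two elements) if and only if G is the complete graph on Fin n. -/
open Matrix

-- spectrum membership from eigenvector
lemma aux_mem_spectrum {n : ℕ} {A : Matrix (Fin n) (Fin n) ℝ} {μ : ℝ} {v : Fin n → ℝ}
    (hv : v ≠ 0) (h : A *ᵥ v = μ • v) : μ ∈ spectrum ℝ A := by
  rw [spectrum.mem_iff]
  intro hu
  rw [Algebra.algebraMap_eq_smul_one, Matrix.isUnit_iff_isUnit_det] at hu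
  have h0 : (μ • (1 : Matrix (Fin n) (Fin n) ℝ) - A) *ᵥ v = 0 := by
    rw [sub_mulVec, smul_mulVec, one_mulVec, h, sub_self]
  rw [(Matrix.exists_mulVec_eq_zero_iff).mp ⟨v, hv, h0⟩] at hu
  exact (by simp : ¬ IsUnit (0:ℝ)) hu

-- spectrum subset {a,b} from quadratic annihilation
lemma aux_spectrum_subset {n : ℕ} [NeZero n] {A : Matrix (Fin n) (Fin n) ℝ} {a b : ℝ}
    (h : A * A = (a + b) • A - (a * b) • 1) : spectrum ℝ A ⊆ {a, b} := by
  intro μ hμ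
  by_contra hab
  simp only [Set.mem_insert_iff, Set.mem_singleton_iff, not_or] at hab
  have hc : (μ - a) * (μ - b) ≠ 0 :=
    mul_ne_zero (sub_ne_zero.mpr hab.1) (sub_ne_zero.mpr hab.2)
  rw [spectrum.mem_iff] at hμ
  apply hμ
  rw [Algebra.algebraMap_eq_smul_one]
  set B : Matrix (Fin n) (Fin n) ℝ := μ • 1 - A with hB
  set C : Matrix (Fin n) (Fin n) ℝ :=
    ((-((μ - a) * (μ - b)))⁻¹) • ((a + b - μ) • 1 - A) with hC
  have key0 : (μ • 1 - A) * ((a + b - μ) • 1 - A) =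
      (-((μ - a) * (μ - b))) • (1 : Matrix (Fin n) (Fin n) ℝ) := by
    simp only [sub_mul, mul_sub, smul_mul_assoc, mul_smul_comm, one_mul, mul_one, h]
    module
  have key : B * C = 1 := by
    rw [hB, hC, Matrix.mul_smul, key0, smul_smul,
      show (-((μ - a) * (μ - b)))⁻¹ * -((μ - a) * (μ - b)) = 1 from inv_mul_cancel₀ (neg_ne_zero.mpr hc)]
    simp
  exact ⟨⟨B, C, key, mul_eq_one_comm.mp key⟩, rfl⟩

lemma aux_quad {n : ℕ} {A : Matrix (Fin n) (Fin n) ℝ} (hA : A.IsHermitian) {a b : ℝ}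
    (h : ∀ i, hA.eigenvalues i = a ∨ hA.eigenvalues i = b) :
    A * A = (a + b) • A - (a * b) • 1 := by
  set U : Matrix (Fin n) (Fin n) ℝ := (hA.eigenvectorUnitary : Matrix (Fin n) (Fin n) ℝ) with hU
  set D : Matrix (Fin n) (Fin n) ℝ := diagonal hA.eigenvalues with hDdef
  have h1 : U * star U = 1 := (Matrix.mem_unitaryGroup_iff).mp hA.eigenvectorUnitary.2
  have h2 : star U * U = 1 := (Matrix.mem_unitaryGroup_iff').mp hA.eigenvectorUnitary.2
  have hD : A = U * D * star U := by
    conv_lhs => rw [hA.spectral_theorem]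
    rw [hU, hDdef]
    congr 1
  have hsq : D * D = (a + b) • D - (a * b) • 1 := by
    rw [hDdef, diagonal_mul_diagonal, ← Matrix.diagonal_one, ← diagonal_smul, ← diagonal_smul,
      diagonal_sub]
    refine (diagonal_eq_diagonal_iff).mpr fun i => ?_
    rcases h i with h' | h' <;> simp only [Pi.sub_apply, Pi.smul_apply, smul_eq_mul, h'] <;> ring
  have hAA : A * A = U * (D * D) * star U := by
    rw [hD]
    simp only [Matrix.mul_assoc]
    rw [show star U * (U * (D * star U)) = D * star U from by rw [← mul_assoc, h2, one_mul]]
  rw [hAA, hsq, Matrix.mul_sub, Matrix.sub_mul, mul_smul_comm, smul_mul_assoc, mul_smul_comm,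
    smul_mul_assoc, mul_one, h1, ← hD]

theorem stmt_14 (n : ℕ) (hn : 2 ≤ n)
    (G : SimpleGraph (Fin n)) [DecidableRel G.Adj] (hG : G.Connected) :
    (spectrum ℝ (G.adjMatrix ℝ)).ncard = 2 ↔ G = ⊤ := by
  have hNZ : NeZero n := ⟨by omega⟩
  constructor
  · intro h2card
    have hA : (G.adjMatrix ℝ).IsHermitian := by
      unfold Matrix.IsHermitian
      ext i j
      simp [Matrix.conjTranspose_apply, SimpleGraph.adjMatrix_apply, G.adj_comm]
    obtain ⟨a, b, hab, hset⟩ := Set.ncard_eq_two.mp h2card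
    have hev : ∀ i, hA.eigenvalues i = a ∨ hA.eigenvalues i = b := by
      intro i
      have := hA.eigenvalues_mem_spectrum_real i
      rw [hset] at this
      simpa using this
    have hq := aux_quad hA hev
    have step : ∀ i j k : Fin n, G.Adj i k → G.Adj k j → i = j ∨ G.Adj i j := by
      intro i j k hik hkj
      by_contra hc
      push_neg at hc
      obtain ⟨hne, hnadj⟩ := hc
      have e1 : (G.adjMatrix ℝ * G.adjMatrix ℝ) i j = 0 := by
        rw [hq]
        simp [Matrix.sub_apply, SimpleGraph.adjMatrix_apply, hnadj, Matrix.one_apply_ne hne]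
      have e2 : (1:ℝ) ≤ (G.adjMatrix ℝ * G.adjMatrix ℝ) i j := by
        rw [Matrix.mul_apply]
        calc (1:ℝ) = G.adjMatrix ℝ i k * G.adjMatrix ℝ k j := by
              simp [SimpleGraph.adjMatrix_apply, hik, hkj]
        _ ≤ ∑ k', G.adjMatrix ℝ i k' * G.adjMatrix ℝ k' j := by
              apply Finset.single_le_sum (f := fun k' => G.adjMatrix ℝ i k' * G.adjMatrix ℝ k' j)
                (fun k' _ => ?_) (Finset.mem_univ k)
              apply mul_nonneg <;> · simp only [SimpleGraph.adjMatrix_apply]; positivity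
      linarith
    have key : ∀ (i j : Fin n) (w : G.Walk i j), i = j ∨ G.Adj i j := by
      intro i j w
      induction w with
      | nil => exact Or.inl rfl
      | cons hadj p ih =>
        rcases ih with rfl | h' 
        · exact Or.inr hadj
        · exact step _ _ _ hadj h'
    ext i j
    simp only [SimpleGraph.top_adj]
    constructor
    · exact fun h => h.ne
    · intro hne
      exact (key i j (hG.preconnected i j).some).resolve_left hne
  · intro hT
    subst hT
    set J : Matrix (Fin n) (Fin n) ℝ := Matrix.of (fun _ _ => (1:ℝ)) with hJ
    have hAJ : (⊤ : SimpleGraph (Fin n)).adjMatrix ℝ = J - 1 := by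
      ext i j
      by_cases h : i = j <;>
        simp [hJ, SimpleGraph.adjMatrix_apply, Matrix.one_apply, h]
    have hJJ : J * J = (n:ℝ) • J := by
      ext i j
      simp [hJ, Matrix.mul_apply]
    have hq : (⊤ : SimpleGraph (Fin n)).adjMatrix ℝ * (⊤ : SimpleGraph (Fin n)).adjMatrix ℝ =
        (((n:ℝ) - 1) + (-1)) • (⊤ : SimpleGraph (Fin n)).adjMatrix ℝ
          - ((((n:ℝ) - 1)) * (-1)) • 1 := by
      rw [hAJ]
      simp only [sub_mul, mul_sub, hJJ, one_mul, mul_one]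
      module
    have hsub := aux_spectrum_subset hq
    obtain ⟨i0, i1, hi01⟩ : ∃ i0 i1 : Fin n, i0 ≠ i1 :=
      ⟨⟨0, by omega⟩, ⟨1, by omega⟩, by simp [Fin.ext_iff]⟩
    have hmem1 : ((n:ℝ) - 1) ∈ spectrum ℝ ((⊤ : SimpleGraph (Fin n)).adjMatrix ℝ) := by
      apply aux_mem_spectrum (v := fun _ => (1:ℝ))
      · intro h0
        have := congrFun h0 i0
        simp at this
      · rw [hAJ, Matrix.sub_mulVec, Matrix.one_mulVec]
        ext i
        simp [hJ, Matrix.mulVec, dotProduct]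
    have hmem2 : (-1 : ℝ) ∈ spectrum ℝ ((⊤ : SimpleGraph (Fin n)).adjMatrix ℝ) := by
      apply aux_mem_spectrum (v := Pi.single i0 (1:ℝ) - Pi.single i1 1)
      · intro h0
        have := congrFun h0 i0
        simp [Pi.single_apply, hi01] at this
      · rw [hAJ, Matrix.sub_mulVec, Matrix.one_mulVec]
        ext i
        simp [hJ, Matrix.mulVec, dotProduct, Pi.single_apply,
          Finset.sum_sub_distrib, hi01]
    have hne : (n:ℝ) - 1 ≠ -1 := by
      have h2 : (2:ℝ) ≤ (n:ℝ) := by exact_mod_cast hn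
      intro h; linarith
    have hset : spectrum ℝ ((⊤ : SimpleGraph (Fin n)).adjMatrix ℝ) = {(n:ℝ) - 1, -1} := by
      apply Set.Subset.antisymm hsub
      intro x hx
      rcases hx with rfl | hx
      · exact hmem1
      · rw [Set.mem_singleton_iff] at hx; subst hx; exact hmem2
    rw [hset, Set.ncard_pair hne]
end

section
/- Let G be a connected simple graph on Fin n with n ≥ 2 and let f : Fin n → EuclideanSpace ℂ (Fin (n−1)) be a G(n,n−1)-frame generated by G. Then f is a tight frame if and only if G is the complete graph on Fin n. -/
open scoped ComplexInnerProductSpace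

lemma aux_lap_apply {n : ℕ} (G : SimpleGraph (Fin n)) [DecidableRel G.Adj] (i j : Fin n) :
    G.lapMatrix ℝ i j = if i = j then (G.degree i : ℝ) else (if G.Adj i j then -1 else 0) := by
  simp only [SimpleGraph.lapMatrix, SimpleGraph.degMatrix, Matrix.sub_apply,
    Matrix.diagonal_apply, SimpleGraph.adjMatrix_apply]
  by_cases h : i = j
  · subst h; simp
  · by_cases h2 : G.Adj i j <;> simp [h, h2]

lemma aux_walk {V : Type*} (G : SimpleGraph V)
    (h : ∀ u k w, G.Adj u k → G.Adj k w → u = w ∨ G.Adj u w) :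
    ∀ m : ℕ, ∀ (i j : V) (p : G.Walk i j), p.length ≤ m → i = j ∨ G.Adj i j := by
  intro m
  induction m with
  | zero =>
    intro i j p hp
    left
    exact p.eq_of_length_eq_zero (Nat.le_zero.mp hp)
  | succ m ih =>
    intro i j p hp
    cases p with
    | nil => left; rfl
    | cons h1 q =>
      rename_i b
      cases q with
      | nil => right; exact h1
      | cons h2 r =>
        rename_i c
        rcases h _ _ _ h1 h2 with he | ha
        · subst he
          exact ih _ _ r (by simp [SimpleGraph.Walk.length_cons] at hp ⊢; omega)
        · exact ih _ _ (SimpleGraph.Walk.cons ha r)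
            (by simp [SimpleGraph.Walk.length_cons] at hp ⊢; omega)

theorem stmt_15 (n : ℕ) (hn : 2 ≤ n)
    (G : SimpleGraph (Fin n)) [DecidableRel G.Adj] (hG : G.Connected)
    (f : Fin n → EuclideanSpace ℂ (Fin (n - 1)))
    (hf_span : Submodule.span ℂ (Set.range f) = ⊤)
    (hf_gram : ∀ i j : Fin n, ⟪f i, f j⟫ = ((G.lapMatrix ℝ) i j : ℂ)) :
    (∃ α : ℝ, 0 < α ∧
      ∀ v : EuclideanSpace ℂ (Fin (n - 1)),
        ∑ i : Fin n, ‖⟪f i, v⟫‖ ^ 2 = α * ‖v‖ ^ 2) ↔ G = ⊤ := by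
  -- row sums of the Laplacian are zero
  have hrow : ∀ i : Fin n, ∑ j, G.lapMatrix ℝ i j = 0 := by
    intro i
    have := congrFun (G.lapMatrix_mulVec_const_eq_zero (R := ℝ)) i
    simpa [Matrix.mulVec, dotProduct] using this
  -- the sum of the frame vectors is zero
  have hsum0 : ∑ i, f i = 0 := by
    have h1 : ⟪∑ i, f i, ∑ j, f j⟫ = 0 := by
      rw [sum_inner]
      simp_rw [inner_sum, hf_gram]
      have : ∀ i, ∑ j, ((G.lapMatrix ℝ i j : ℂ)) = 0 := by
        intro i
        rw [← Complex.ofReal_sum, hrow i, Complex.ofReal_zero]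
      simp [this]
    exact inner_self_eq_zero.mp h1
  have hvv : ∀ v : EuclideanSpace ℂ (Fin (n - 1)), ⟪v, v⟫ = ((‖v‖ ^ 2 : ℝ) : ℂ) := by
    intro v
    rw [inner_self_eq_norm_sq_to_K]
    norm_cast
  constructor
  · rintro ⟨α, hα, htight⟩
    -- the frame operator
    set S : EuclideanSpace ℂ (Fin (n - 1)) →ₗ[ℂ] EuclideanSpace ℂ (Fin (n - 1)) :=
      { toFun := fun v => ∑ i, ⟪f i, v⟫ • f i
        map_add' := by
          intro x y
          simp [inner_add_right, add_smul, Finset.sum_add_distrib]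
        map_smul' := by
          intro c x
          simp [inner_smul_right, smul_smul, Finset.smul_sum] } with hS
    set T : EuclideanSpace ℂ (Fin (n - 1)) →ₗ[ℂ] EuclideanSpace ℂ (Fin (n - 1)) :=
      S - (α : ℂ) • LinearMap.id with hT
    have hSv : ∀ v, ⟪T v, v⟫ = 0 := by
      intro v
      have h1 : ⟪S v, v⟫ = ((∑ i, ‖⟪f i, v⟫‖ ^ 2 : ℝ) : ℂ) := by
        have hSapp : S v = ∑ i, ⟪f i, v⟫ • f i := rfl
        rw [hSapp, sum_inner]
        push_cast
        refine Finset.sum_congr rfl fun i _ => ?_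
        rw [inner_smul_left, RCLike.conj_mul]
        norm_cast
      rw [hT, LinearMap.sub_apply, LinearMap.smul_apply, LinearMap.id_apply, inner_sub_left,
        inner_smul_left, h1, htight v, hvv v, Complex.conj_ofReal]
      rw [Complex.ofReal_mul, Complex.ofReal_pow]
      ring
    have hSid : S = (α : ℂ) • LinearMap.id := by
      have h0 := (inner_map_self_eq_zero T).mp hSv
      rw [hT, sub_eq_zero] at h0
      exact h0
    -- no common neighbors for non-adjacent vertices
    have hkey : ∀ u k w, G.Adj u k → G.Adj k w → u = w ∨ G.Adj u w := by
      intro u k w huk hkw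
      by_contra hcon
      push_neg at hcon
      obtain ⟨hne, hnadj⟩ := hcon
      have hLuw : G.lapMatrix ℝ u w = 0 := by
        rw [aux_lap_apply]; simp [hne, hnadj]
      have hSfw : S (f w) = (α : ℂ) • f w := by rw [hSid]; rfl
      have h3 : ⟪f u, S (f w)⟫ = (α : ℂ) * ⟪f u, f w⟫ := by
        rw [hSfw, inner_smul_right]
      have h4 : (∑ i, (G.lapMatrix ℝ i w : ℂ) * (G.lapMatrix ℝ u i : ℂ)) = 0 := by
        have hl : ⟪f u, S (f w)⟫ = ∑ i, (G.lapMatrix ℝ i w : ℂ) * (G.lapMatrix ℝ u i : ℂ) := by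
          have hSapp : S (f w) = ∑ i, ⟪f i, f w⟫ • f i := rfl
          rw [hSapp, inner_sum]
          refine Finset.sum_congr rfl fun i _ => ?_
          rw [inner_smul_right, hf_gram, hf_gram]
        rw [hl] at h3
        rw [h3, hf_gram, hLuw]
        simp
      have h5 : (∑ i, G.lapMatrix ℝ i w * G.lapMatrix ℝ u i) = 0 := by
        have h6 : ((∑ i, G.lapMatrix ℝ i w * G.lapMatrix ℝ u i : ℝ) : ℂ) = 0 := by
          push_cast
          exact h4
        exact_mod_cast h6
      have hnonneg : ∀ i ∈ Finset.univ, (0:ℝ) ≤ G.lapMatrix ℝ i w * G.lapMatrix ℝ u i := by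
        intro i _
        rcases eq_or_ne i w with rfl | hiw
        · rw [hLuw, mul_zero]
        rcases eq_or_ne i u with rfl | hiu
        · rw [hLuw]; simp
        rw [aux_lap_apply, aux_lap_apply, if_neg hiw, if_neg (Ne.symm hiu)]
        by_cases h1 : G.Adj i w <;> by_cases h2 : G.Adj u i <;> simp [h1, h2]
      have hterm := (Finset.sum_eq_zero_iff_of_nonneg hnonneg).mp h5 k (Finset.mem_univ k)
      have hkne_w : k ≠ w := fun h => hnadj (h ▸ huk)
      have hune_k : u ≠ k := G.ne_of_adj huk
      rw [aux_lap_apply, aux_lap_apply, if_neg hkne_w, if_pos hkw, if_neg hune_k,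
        if_pos huk] at hterm
      norm_num at hterm
    -- conclude completeness
    ext i j
    simp only [SimpleGraph.top_adj]
    constructor
    · exact G.ne_of_adj
    · intro hne
      obtain ⟨p⟩ := hG i j
      rcases aux_walk G hkey p.length i j p le_rfl with h | h
      · exact absurd h hne
      · exact h
  · intro hGtop
    refine ⟨n, by positivity, ?_⟩
    intro v
    set w : EuclideanSpace ℂ (Fin (n - 1)) := (∑ i, ⟪f i, v⟫ • f i) - (n : ℂ) • v with hw
    have hinner_sum : ∑ i, ⟪f i, v⟫ = 0 := by
      rw [← sum_inner, hsum0, inner_zero_left]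
    have hfj : ∀ j, ⟪f j, w⟫ = 0 := by
      intro j
      have hdegN : G.degree j = n - 1 := by
        have hnb : G.neighborFinset j = Finset.univ.erase j := by
          ext x
          simp [SimpleGraph.mem_neighborFinset, hGtop, ne_comm]
        show (G.neighborFinset j).card = n - 1
        rw [hnb, Finset.card_erase_of_mem (Finset.mem_univ j), Finset.card_univ,
          Fintype.card_fin]
      have hdeg : (G.degree j : ℝ) = (n : ℝ) - 1 := by
        rw [hdegN, Nat.cast_sub (by omega : 1 ≤ n), Nat.cast_one]
      have hLij : ∀ i, ⟪f j, f i⟫ = if j = i then (n : ℂ) - 1 else -1 := by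
        intro i
        rw [hf_gram, aux_lap_apply]
        by_cases h : j = i
        · subst h
          simp only [if_pos rfl]
          rw [hdeg]
          push_cast
          ring
        · have hadj : G.Adj j i := by rw [hGtop]; exact h
          simp only [if_neg h, if_pos hadj]
          norm_num
      rw [hw, inner_sub_right, inner_sum, inner_smul_right]
      simp_rw [inner_smul_right, hLij]
      have hsplit : ∀ x : Fin n, ⟪f x, v⟫ * (if j = x then (n:ℂ) - 1 else -1)
          = (if j = x then (n : ℂ) * ⟪f x, v⟫ else 0) - ⟪f x, v⟫ := by
        intro x; split <;> ring
      rw [Finset.sum_congr rfl (fun x _ => hsplit x), Finset.sum_sub_distrib,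
        Finset.sum_ite_eq, hinner_sum]
      simp
    have hw0 : w = 0 := by
      have hall : ∀ x : EuclideanSpace ℂ (Fin (n - 1)), ⟪x, w⟫ = 0 := by
        intro x
        have hx : x ∈ Submodule.span ℂ (Set.range f) := by rw [hf_span]; trivial
        induction hx using Submodule.span_induction with
        | mem x hx => obtain ⟨j, rfl⟩ := hx; exact hfj j
        | zero => simp
        | add x y _ _ hx hy => rw [inner_add_left, hx, hy, add_zero]
        | smul c x _ hx => rw [inner_smul_left, hx, mul_zero]
      exact inner_self_eq_zero.mp (hall w)
    have hsum : (∑ i, ⟪f i, v⟫ • f i) = (n : ℂ) • v := by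
      have h0 := hw0
      rw [hw, sub_eq_zero] at h0
      exact h0
    have h1 : ((∑ i, ‖⟪f i, v⟫‖ ^ 2 : ℝ) : ℂ) = ⟪v, ∑ i, ⟪f i, v⟫ • f i⟫ := by
      rw [inner_sum]
      push_cast
      refine Finset.sum_congr rfl fun i _ => ?_
      rw [inner_smul_right, ← inner_conj_symm v (f i), RCLike.mul_conj]
      norm_cast
    rw [hsum, inner_smul_right, hvv v] at h1
    have h2 : ((∑ i, ‖⟪f i, v⟫‖ ^ 2 : ℝ) : ℂ) = (((n : ℝ) * ‖v‖ ^ 2 : ℝ) : ℂ) := by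
      rw [h1]
      push_cast
      ring
    exact_mod_cast h2
end

section
/- Let f : Fin n → EuclideanSpace ℂ (Fin k) be an α-tight frame for ℂ^k with α > 0 (that is, ∑ i, ‖⟪f i, v⟫‖² = α · ‖v‖² for every v ∈ ℂ^k). Then its Gramian matrix 𝒢 (the n×n complex matrix with (i,j)-entry ⟪f i, f j⟫) satisfies 𝒢 · 𝒢 = α • 𝒢. -/
open scoped ComplexInnerProductSpace

theorem stmt_16 (n k : ℕ) (f : Fin n → EuclideanSpace ℂ (Fin k))
    (α : ℝ) (hα : 0 < α)
    (htight : ∀ v : EuclideanSpace ℂ (Fin k),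
      ∑ i : Fin n, ‖⟪f i, v⟫‖ ^ 2 = α * ‖v‖ ^ 2)
    (𝒢 : Matrix (Fin n) (Fin n) ℂ)
    (h𝒢 : ∀ i j : Fin n, 𝒢 i j = ⟪f i, f j⟫) :
    𝒢 * 𝒢 = (α : ℂ) • 𝒢 := by
  have hT : ∀ v : EuclideanSpace ℂ (Fin k),
      (∑ l, ⟪f l, v⟫ • f l) = (α : ℂ) • v := by
    set T : EuclideanSpace ℂ (Fin k) →ₗ[ℂ] EuclideanSpace ℂ (Fin k) :=
      { toFun := fun v => (∑ l, ⟪f l, v⟫ • f l) - (α : ℂ) • v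
        map_add' := by
          intro x y
          simp only [inner_add_right, add_smul, Finset.sum_add_distrib, smul_add]
          abel
        map_smul' := by
          intro c x
          simp only [inner_smul_right, Finset.smul_sum, smul_sub, smul_smul,
            RingHom.id_apply, mul_comm] }
    have hz : T = 0 := by
      rw [← inner_map_self_eq_zero]
      intro v
      have hTv : ⟪T v, v⟫ =
          (∑ l, (starRingEnd ℂ) ⟪f l, v⟫ * ⟪f l, v⟫) - (α : ℂ) * ⟪v, v⟫ := by
        simp only [T, LinearMap.coe_mk, AddHom.coe_mk, inner_sub_left, sum_inner,
          inner_smul_left, Complex.conj_ofReal]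
      rw [hTv]
      have h2 : (∑ l, (starRingEnd ℂ) ⟪f l, v⟫ * ⟪f l, v⟫)
          = ((α * ‖v‖ ^ 2 : ℝ) : ℂ) := by
        rw [← htight v]
        push_cast
        refine Finset.sum_congr rfl fun l _ => ?_
        simpa using RCLike.conj_mul (⟪f l, v⟫ : ℂ)
      rw [h2, inner_self_eq_norm_sq_to_K]
      push_cast
      exact sub_self _
    intro v
    have := congrFun (congrArg DFunLike.coe hz) v
    simp only [T, LinearMap.coe_mk, AddHom.coe_mk, LinearMap.zero_apply,
      sub_eq_zero] at this
    exact this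
  ext i j
  have key : ⟪f i, ∑ l, ⟪f l, f j⟫ • f l⟫
      = ⟪f i, ((α : ℂ) • f j : EuclideanSpace ℂ (Fin k))⟫ := by rw [hT (f j)]
  rw [inner_sum, inner_smul_right] at key
  simp only [inner_smul_right] at key
  simp only [Matrix.mul_apply, Matrix.smul_apply, h𝒢, smul_eq_mul]
  rw [← key]
  exact Finset.sum_congr rfl fun l _ => mul_comm _ _
end
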